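/- Let G = (V, E) be a finite simple graph with |V| = n, and let T_G ⊆ (2^V → ℝ) be the subspace of functions T satisfying Σ_{σ : e ∈ δσ} T(σ) = 0 for every edge e (where δσ is the cut of σ). Then dim T_G = 2^n − |E|. -/

import Mathlib

open Finset

/-- The space `T_G` of functions `T : 2^V → ℝ` such that for every edge `e` of `G`,
the sum of `T(σ)` over all `σ` whose cut contains `e` vanishes. -/
def TGset {V : Type*} [Fintype V] [DecidableEq V] (G : SimpleGraph V) :
    Set (Finset V → ℝ) :=
  {T | ∀ i j : V, G.Adj i j →
    ∑ σ ∈ Finset.univ.filter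
        (fun σ : Finset V => (i ∈ σ ∧ j ∉ σ) ∨ (i ∉ σ ∧ j ∈ σ)), T σ = 0}

namespace TGaux

variable {V : Type*} [Fintype V] [DecidableEq V]

open scoped Classical in
/-- The set of subsets whose cut contains the edge `e`. -/
noncomputable def cutSet (e : Sym2 V) : Finset (Finset V) :=
  univ.filter (fun σ => Sym2.lift
    ⟨fun i j => (i ∈ σ ∧ j ∉ σ) ∨ (i ∉ σ ∧ j ∈ σ), fun i j => propext (by tauto)⟩ e)

lemma mem_cutSet (i j : V) (σ : Finset V) :
    σ ∈ cutSet s(i, j) ↔ ((i ∈ σ ∧ j ∉ σ) ∨ (i ∉ σ ∧ j ∈ σ)) := by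
  classical
  rw [cutSet, Finset.mem_filter]
  simp

lemma sum_cutSet_eq (i j : V) (T : Finset V → ℝ) :
    ∑ σ ∈ cutSet s(i, j), T σ
      = ∑ σ ∈ Finset.univ.filter
          (fun σ : Finset V => (i ∈ σ ∧ j ∉ σ) ∨ (i ∉ σ ∧ j ∈ σ)), T σ := by
  apply Finset.sum_congr _ (fun _ _ => rfl)
  ext σ
  simp [mem_cutSet]

variable (G : SimpleGraph V) [DecidableRel G.Adj]

/-- The cut-incidence linear map. -/
noncomputable def Φ : (Finset V → ℝ) →ₗ[ℝ] (↥G.edgeFinset → ℝ) where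
  toFun T e := ∑ σ ∈ cutSet e.1, T σ
  map_add' T S := by
    funext e
    simp [Finset.sum_add_distrib]
  map_smul' c T := by
    funext e
    simp [Finset.mul_sum]

lemma Φ_apply (T : Finset V → ℝ) (e : ↥G.edgeFinset) :
    Φ G T e = ∑ σ ∈ cutSet e.1, T σ := rfl

lemma Φ_single (σ0 : Finset V) (c : ℝ) (e : ↥G.edgeFinset) :
    Φ G (Pi.single σ0 c) e = if σ0 ∈ cutSet e.1 then c else 0 := by
  rw [Φ_apply]
  simp [Pi.single_apply, Finset.sum_ite_eq']

lemma Φ_surjective : Function.Surjective (Φ G) := by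
  rw [← LinearMap.range_eq_top, eq_top_iff, ← (Pi.basisFun ℝ (↥G.edgeFinset)).span_eq]
  refine Submodule.span_le.2 ?_
  rintro _ ⟨e, rfl⟩
  rw [Pi.basisFun_apply]
  obtain ⟨e, he⟩ := e
  induction e using Sym2.ind with
  | _ i j =>
  rw [SimpleGraph.mem_edgeFinset, SimpleGraph.mem_edgeSet] at he
  have hij : i ≠ j := he.ne
  refine ⟨(1/2 : ℝ) • (Pi.single {i} 1 + Pi.single {j} 1 - Pi.single ({i, j} : Finset V) 1), ?_⟩
  funext f
  obtain ⟨f, hf⟩ := f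
  induction f using Sym2.ind with
  | _ a b =>
  have hab : a ≠ b := ((SimpleGraph.mem_edgeSet G).1 (SimpleGraph.mem_edgeFinset.1 hf)).ne
  rw [map_smul, map_sub, map_add]
  simp only [Pi.smul_apply, Pi.sub_apply, Pi.add_apply, Φ_single, smul_eq_mul]
  rw [Pi.single_apply]
  simp only [Subtype.mk.injEq, Sym2.eq_iff, mem_cutSet, Finset.mem_singleton,
    Finset.mem_insert]
  by_cases hai : a = i <;> by_cases haj : a = j <;> by_cases hbi : b = i <;>
    by_cases hbj : b = j <;> subst_vars <;> simp_all <;> norm_num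

lemma TGset_eq_ker : TGset G = (LinearMap.ker (Φ G) : Set (Finset V → ℝ)) := by
  ext T
  simp only [TGset, Set.mem_setOf_eq, SetLike.mem_coe, LinearMap.mem_ker, funext_iff,
    Pi.zero_apply]
  constructor
  · intro h e
    obtain ⟨e, he⟩ := e
    induction e using Sym2.ind with
    | _ i j =>
    rw [SimpleGraph.mem_edgeFinset, SimpleGraph.mem_edgeSet] at he
    rw [Φ_apply]
    rw [sum_cutSet_eq]
    exact h i j he
  · intro h i j hij
    have := h ⟨s(i, j), by simp [SimpleGraph.mem_edgeFinset, hij]⟩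
    rw [Φ_apply, sum_cutSet_eq] at this
    exact this

end TGaux

/-- `dim T_G = 2^n − |E|`. -/
theorem stmt_6 {V : Type*} [Fintype V] [DecidableEq V] (G : SimpleGraph V)
    [DecidableRel G.Adj] :
    Module.finrank ℝ ↥(Submodule.span ℝ (TGset G))
      = 2 ^ (Fintype.card V) - G.edgeFinset.card := by
  rw [TGaux.TGset_eq_ker G, Submodule.span_eq]
  have h1 := LinearMap.finrank_range_add_finrank_ker (TGaux.Φ G)
  rw [LinearMap.range_eq_top.2 (TGaux.Φ_surjective G), finrank_top] at h1
  simp only [Module.finrank_fintype_fun_eq_card, Fintype.card_finset, Fintype.card_coe] at h1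
  omega
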